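/- Let d ≥ 1, σ > d/2, γ ∈ (0,1], z ≥ 0, t ∈ ℝ, and let ω : 𝕋^d → ℝ be a function with Fourier coefficients ω̂(k). Define the Gevrey norm ‖A ω‖²_{L²} = ∑_{k∈ℤ^d} e^{2z⟨(k,kt)⟩^γ} ⟨(k,kt)⟩^{2σ} |ω̂(k)|². Then there is a constant C (depending only on σ, d, γ) such that ‖A(ω²)‖_{L²} ≤ C‖Aω‖²_{L²}, i.e. the Gevrey space with weight A is an algebra under pointwise multiplication. -/

import Mathlib

/-- The bracket `⟨(k,kt)⟩ = √(1+|k|²+|kt|²)` for `k ∈ ℤ^d`. -/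
noncomputable def brkt (d : ℕ) (t : ℝ) (k : Fin d → ℤ) : ℝ :=
  Real.sqrt (1 + (∑ i, ((k i : ℝ)) ^ 2) + t ^ 2 * ∑ i, ((k i : ℝ)) ^ 2)

/-- The Gevrey weight `A_z(k,kt) = e^{z⟨(k,kt)⟩^γ} ⟨(k,kt)⟩^σ`. -/
noncomputable def wA (d : ℕ) (γ z σ t : ℝ) (k : Fin d → ℤ) : ℝ :=
  Real.exp (z * brkt d t k ^ γ) * brkt d t k ^ σ

open scoped NNReal ENNReal

lemma nsq_nonneg (d : ℕ) (k : Fin d → ℤ) : (0:ℝ) ≤ ∑ i, ((k i : ℝ)) ^ 2 :=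
  Finset.sum_nonneg fun _ _ => sq_nonneg _

lemma one_le_brkt (d : ℕ) (t : ℝ) (k : Fin d → ℤ) : 1 ≤ brkt d t k := by
  have h : Real.sqrt 1 ≤ brkt d t k := by
    apply Real.sqrt_le_sqrt
    nlinarith [nsq_nonneg d k, mul_nonneg (sq_nonneg t) (nsq_nonneg d k)]
  simpa using h

lemma brkt_nonneg (d : ℕ) (t : ℝ) (k : Fin d → ℤ) : 0 ≤ brkt d t k :=
  Real.sqrt_nonneg _

lemma sqrt_one_le_brkt (d : ℕ) (t : ℝ) (k : Fin d → ℤ) :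
    Real.sqrt (1 + ∑ i, ((k i : ℝ)) ^ 2) ≤ brkt d t k := by
  apply Real.sqrt_le_sqrt
  nlinarith [mul_nonneg (sq_nonneg t) (nsq_nonneg d k)]

lemma sqrt_aux {s a b c : ℝ} (hs : 0 ≤ s) (ha : 0 ≤ a) (hb : 0 ≤ b) (hc : 0 ≤ c)
    (h : a ≤ b + c) :
    Real.sqrt (1 + s * a ^ 2) ≤ Real.sqrt (1 + s * b ^ 2) + Real.sqrt (1 + s * c ^ 2) := by
  set B := Real.sqrt (1 + s * b ^ 2) with hB
  set C := Real.sqrt (1 + s * c ^ 2) with hC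
  have hB0 : 0 ≤ B := Real.sqrt_nonneg _
  have hC0 : 0 ≤ C := Real.sqrt_nonneg _
  have hB2 : B ^ 2 = 1 + s * b ^ 2 := Real.sq_sqrt (by positivity)
  have hC2 : C ^ 2 = 1 + s * c ^ 2 := Real.sq_sqrt (by positivity)
  have hBC : s * (b * c) ≤ B * C := by
    have h1 : Real.sqrt (s * b ^ 2) ≤ B := Real.sqrt_le_sqrt (by nlinarith)
    have h2 : Real.sqrt (s * c ^ 2) ≤ C := Real.sqrt_le_sqrt (by nlinarith)
    have h3 : Real.sqrt (s * b ^ 2) * Real.sqrt (s * c ^ 2) = s * (b * c) := by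
      rw [← Real.sqrt_mul (by positivity), show s * b ^ 2 * (s * c ^ 2) = (s * (b * c)) ^ 2 by ring]
      exact Real.sqrt_sq (by positivity)
    calc s * (b * c) = _ := h3.symm
      _ ≤ B * C := mul_le_mul h1 h2 (Real.sqrt_nonneg _) hB0
  have key : Real.sqrt (1 + s * a ^ 2) ≤ Real.sqrt ((B + C) ^ 2) := by
    apply Real.sqrt_le_sqrt
    nlinarith [mul_le_mul_of_nonneg_left (mul_self_le_mul_self ha h) hs]
  rwa [Real.sqrt_sq (by positivity)] at key

lemma brkt_triangle (d : ℕ) (t : ℝ) (k l : Fin d → ℤ) :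
    brkt d t k ≤ brkt d t (k - l) + brkt d t l := by
  set nrm : (Fin d → ℤ) → ℝ := fun m => Real.sqrt (∑ i, ((m i : ℝ)) ^ 2) with hnrm
  have hbr : ∀ m : Fin d → ℤ, brkt d t m = Real.sqrt (1 + (1 + t ^ 2) * (nrm m) ^ 2) := by
    intro m
    rw [brkt, hnrm]
    simp only
    rw [Real.sq_sqrt (nsq_nonneg d m)]
    ring_nf
  have htri : nrm k ≤ nrm (k - l) + nrm l := by
    set v : (Fin d → ℤ) → EuclideanSpace ℝ (Fin d) := fun m => WithLp.toLp 2 (fun i => (m i : ℝ)) with hv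
    have hnv : ∀ m, nrm m = ‖v m‖ := by
      intro m
      rw [EuclideanSpace.norm_eq, hnrm]
      simp [hv, Real.norm_eq_abs, sq_abs]
    have hadd : v k = v (k - l) + v l := by
      ext i
      simp [hv]
    rw [hnv, hnv, hnv, hadd]
    exact norm_add_le _ _
  rw [hbr, hbr, hbr]
  exact sqrt_aux (by positivity) (Real.sqrt_nonneg _) (Real.sqrt_nonneg _) (Real.sqrt_nonneg _) htri

section
variable {γ σ : ℝ}

lemma rpow_gamma_sub (hγ0 : 0 < γ) (hγ1 : γ ≤ 1) {a b c : ℝ} (ha : 0 ≤ a) (hb : 0 ≤ b)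
    (hc : 0 ≤ c) (h : a ≤ b + c) : a ^ γ ≤ b ^ γ + c ^ γ := by
  have h1 : a ^ γ ≤ (b + c) ^ γ := Real.rpow_le_rpow ha h hγ0.le
  have h4 : (b + c) ^ γ ≤ b ^ γ + c ^ γ := by
    have h2 := NNReal.rpow_add_le_add_rpow (Real.toNNReal b) (Real.toNNReal c) hγ0.le hγ1
    have h3 := NNReal.coe_le_coe.2 h2
    push_cast at h3
    rwa [Real.coe_toNNReal _ hb, Real.coe_toNNReal _ hc] at h3
  linarith

lemma rpow_sigma_sub (hσ : 0 ≤ σ) {a b c : ℝ} (ha : 0 ≤ a) (hb : 0 ≤ b)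
    (hc : 0 ≤ c) (h : a ≤ b + c) : a ^ σ ≤ 2 ^ σ * (b ^ σ + c ^ σ) := by
  have h1 : a ^ σ ≤ (b + c) ^ σ := Real.rpow_le_rpow ha h hσ
  have h2σ : (0:ℝ) ≤ 2 ^ σ := Real.rpow_nonneg (by norm_num) σ
  rcases le_total b c with hbc | hbc
  · have h2 : (b + c) ^ σ ≤ (2 * c) ^ σ := Real.rpow_le_rpow (by linarith) (by linarith) hσ
    rw [Real.mul_rpow (by norm_num) hc] at h2
    have hb' : 0 ≤ b ^ σ := Real.rpow_nonneg hb σ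
    nlinarith
  · have h2 : (b + c) ^ σ ≤ (2 * b) ^ σ := Real.rpow_le_rpow (by linarith) (by linarith) hσ
    rw [Real.mul_rpow (by norm_num) hb] at h2
    have hc' : 0 ≤ c ^ σ := Real.rpow_nonneg hc σ
    nlinarith

end

lemma summable_one_add_sq_int {p : ℝ} (hp : 1 / 2 < p) :
    Summable (fun n : ℤ => (1 + (n : ℝ) ^ 2) ^ (-p)) := by
  have hp2 : 1 < 2 * p := by linarith
  have hmaj : Summable (fun n : ℤ => |(n : ℝ)| ^ (-(2 * p)) + if n = 0 then (1:ℝ) else 0) := by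
    apply (Real.summable_abs_int_rpow hp2).add
    apply summable_of_ne_finset_zero (s := {(0:ℤ)})
    intro n hn
    simp only [Finset.mem_singleton] at hn
    simp [hn]
  apply Summable.of_nonneg_of_le (fun n => by positivity) _ hmaj
  intro n
  by_cases hn : n = 0
  · subst hn
    simp only [Int.cast_zero, abs_zero, if_true]
    rw [Real.zero_rpow (by linarith)]
    norm_num
  · simp only [hn, if_false, add_zero]
    have hn1 : (1:ℝ) ≤ (n : ℝ) ^ 2 := by
      have h : (1:ℤ) ≤ n ^ 2 := by
        rcases lt_or_gt_of_ne hn with h | h <;> nlinarith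
      exact_mod_cast h
    have heq : |(n : ℝ)| ^ (-(2 * p)) = ((n:ℝ) ^ 2) ^ (-p) := by
      rw [show ((n:ℝ) ^ 2) = |(n:ℝ)| ^ (2:ℕ) by rw [sq_abs], ← Real.rpow_natCast |(n:ℝ)| 2,
        ← Real.rpow_mul (abs_nonneg _)]
      norm_num
    rw [heq]
    exact Real.rpow_le_rpow_of_nonpos (by linarith) (by linarith) (by linarith)

lemma summable_pi_prod {g : ℤ → ℝ} (hg0 : ∀ n, 0 ≤ g n) (hg : Summable g) :
    ∀ d : ℕ, Summable (fun k : Fin d → ℤ => ∏ i, g (k i)) := by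
  intro d
  induction d with
  | zero => exact Summable.of_finite
  | succ n ih =>
    apply (Fin.consEquiv (fun _ : Fin (n+1) => ℤ)).summable_iff.1
    have hprod : Summable (fun p : ℤ × (Fin n → ℤ) => g p.1 * ∏ i, g (p.2 i)) := by
      apply Summable.mul_of_nonneg (f := g) (g := fun k : Fin n → ℤ => ∏ i, g (k i)) hg ih
      · exact Pi.le_def.mpr hg0
      · exact Pi.le_def.mpr fun _ => Finset.prod_nonneg fun i _ => hg0 _
    apply hprod.congr
    intro p
    simp only [Function.comp_apply, Fin.consEquiv_apply]
    rw [Fin.prod_univ_succ]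
    simp

lemma summable_majorant (d : ℕ) (hd : 1 ≤ d) {σ : ℝ} (hσ : (d : ℝ) / 2 < σ) :
    Summable (fun k : Fin d → ℤ => (1 + ∑ i, ((k i : ℝ)) ^ 2) ^ (-σ)) := by
  have hd0 : (0:ℝ) < d := by exact_mod_cast hd
  set p := σ / d with hp
  have hp2 : 1 / 2 < p := by
    rw [hp, lt_div_iff₀ hd0]
    calc 1 / 2 * (d:ℝ) = (d:ℝ) / 2 := by ring
      _ < σ := hσ
  have h1d : Summable (fun n : ℤ => (1 + (n : ℝ) ^ 2) ^ (-p)) := summable_one_add_sq_int hp2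
  have hmaj := summable_pi_prod (g := fun n : ℤ => (1 + (n : ℝ) ^ 2) ^ (-p))
    (fun n => by positivity) h1d d
  apply Summable.of_nonneg_of_le (fun k => by positivity) _ hmaj
  intro k
  have hs0 : (0:ℝ) ≤ ∑ i, ((k i : ℝ)) ^ 2 := Finset.sum_nonneg fun _ _ => sq_nonneg _
  have hterm : ∀ i, (1 + ((k i : ℝ)) ^ 2) ≤ 1 + ∑ i, ((k i : ℝ)) ^ 2 := by
    intro i
    have h := Finset.single_le_sum (f := fun i => ((k i : ℝ)) ^ 2)
      (fun _ _ => sq_nonneg _) (Finset.mem_univ i)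
    linarith
  have hprod : ∏ i, (1 + ((k i : ℝ)) ^ 2) ≤ (1 + ∑ i, ((k i : ℝ)) ^ 2) ^ d := by
    calc ∏ i, (1 + ((k i : ℝ)) ^ 2)
        ≤ ∏ _i : Fin d, (1 + ∑ i, ((k i : ℝ)) ^ 2) :=
          Finset.prod_le_prod (fun i _ => by positivity) (fun i _ => hterm i)
      _ = (1 + ∑ i, ((k i : ℝ)) ^ 2) ^ d := by
          rw [Finset.prod_const, Finset.card_univ, Fintype.card_fin]
  have hppos : 0 < p := by linarith
  have hprodpos : (0:ℝ) < ∏ i, (1 + ((k i : ℝ)) ^ 2) :=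
    Finset.prod_pos fun i _ => by positivity
  calc (1 + ∑ i, ((k i : ℝ)) ^ 2) ^ (-σ)
      = ((1 + ∑ i, ((k i : ℝ)) ^ 2) ^ (d:ℕ)) ^ (-p) := by
        rw [← Real.rpow_natCast (1 + ∑ i, ((k i : ℝ)) ^ 2) d, ← Real.rpow_mul (by linarith)]
        congr 1
        rw [hp]
        field_simp
    _ ≤ (∏ i, (1 + ((k i : ℝ)) ^ 2)) ^ (-p) :=
        Real.rpow_le_rpow_of_nonpos hprodpos hprod (by linarith)
    _ = ∏ i, (1 + ((k i : ℝ)) ^ 2) ^ (-p) :=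
        (Real.finset_prod_rpow Finset.univ (fun i => 1 + ((k i : ℝ)) ^ 2)
          (fun i _ => by positivity) (-p)).symm

lemma enn_mul_le_sq_add_sq (x y : ℝ≥0∞) : x * y ≤ x ^ 2 + y ^ 2 := by
  rcases le_total x y with h | h
  · calc x * y ≤ y * y := mul_le_mul' h le_rfl
      _ = y ^ 2 := (sq y).symm
      _ ≤ x ^ 2 + y ^ 2 := le_add_self
  · calc x * y ≤ x * x := mul_le_mul' le_rfl h
      _ = x ^ 2 := (sq x).symm
      _ ≤ x ^ 2 + y ^ 2 := le_self_add

lemma enn_sq_tsum {ι : Type*} (f : ι → ℝ≥0∞) :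
    (∑' i, f i) ^ 2 = ∑' i, ∑' j, f i * f j := by
  rw [sq, ← ENNReal.tsum_mul_right]
  congr 1
  funext i
  rw [ENNReal.tsum_mul_left]

section
variable {ι : Type*} [AddCommGroup ι]

lemma enn_shift_tsum (a : ι → ℝ≥0∞) (l : ι) : ∑' k, a (k - l) = ∑' k, a k :=
  (Equiv.subRight l).tsum_eq a

lemma enn_conv_flip (a b : ι → ℝ≥0∞) (k : ι) :
    ∑' l, a (k - l) * b l = ∑' l, b (k - l) * a l := by
  rw [← (Equiv.subLeft k).tsum_eq (fun l => a (k - l) * b l)]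
  apply tsum_congr
  intro l
  simp [Equiv.subLeft, sub_sub_cancel, mul_comm]

lemma enn_conv_l2 (a b : ι → ℝ≥0∞) :
    ∑' k, (∑' l, a (k - l) * b l) ^ 2 ≤ 2 * (∑' k, a k ^ 2) * (∑' l, b l) ^ 2 := by
  have step1 : ∀ k : ι, (∑' l, a (k - l) * b l) ^ 2
      ≤ ∑' l, ∑' m, (a (k - l) ^ 2 + a (k - m) ^ 2) * (b l * b m) := by
    intro k
    rw [enn_sq_tsum]
    refine ENNReal.tsum_le_tsum fun l => ENNReal.tsum_le_tsum fun m => ?_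
    calc a (k - l) * b l * (a (k - m) * b m)
        = (a (k - l) * a (k - m)) * (b l * b m) := by ring
      _ ≤ (a (k - l) ^ 2 + a (k - m) ^ 2) * (b l * b m) :=
        mul_le_mul' (enn_mul_le_sq_add_sq _ _) le_rfl
  calc ∑' k, (∑' l, a (k - l) * b l) ^ 2
      ≤ ∑' k, ∑' l, ∑' m, (a (k - l) ^ 2 + a (k - m) ^ 2) * (b l * b m) :=
        ENNReal.tsum_le_tsum step1
    _ = ∑' k, ∑' l, ∑' m, (a (k - l) ^ 2 * (b l * b m) + a (k - m) ^ 2 * (b l * b m)) := by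
        simp_rw [add_mul]
    _ = (∑' k, ∑' l, ∑' m, a (k - l) ^ 2 * (b l * b m))
        + (∑' k, ∑' l, ∑' m, a (k - m) ^ 2 * (b l * b m)) := by
        simp_rw [ENNReal.tsum_add]
    _ = 2 * (∑' k, a k ^ 2) * (∑' l, b l) ^ 2 := by
        have h1 : (∑' k : ι, ∑' l : ι, ∑' m : ι, a (k - l) ^ 2 * (b l * b m))
            = (∑' k, a k ^ 2) * (∑' l, b l) ^ 2 := by
          rw [ENNReal.tsum_comm (f := fun k l => ∑' m, a (k - l) ^ 2 * (b l * b m))]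
          calc ∑' l, ∑' k, ∑' m, a (k - l) ^ 2 * (b l * b m)
              = ∑' l, ∑' k, a (k - l) ^ 2 * (b l * ∑' m, b m) := by
                simp_rw [ENNReal.tsum_mul_left]
            _ = ∑' l, (∑' k, a (k - l) ^ 2) * (b l * ∑' m, b m) := by
                simp_rw [ENNReal.tsum_mul_right]
            _ = ∑' l, (∑' k, a k ^ 2) * (b l * ∑' m, b m) := by
                simp_rw [enn_shift_tsum (fun k => a k ^ 2)]
            _ = (∑' k, a k ^ 2) * ((∑' l, b l) * (∑' m, b m)) := by
                rw [ENNReal.tsum_mul_left, ENNReal.tsum_mul_right]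
            _ = (∑' k, a k ^ 2) * (∑' l, b l) ^ 2 := by rw [sq]
        have h2 : (∑' k : ι, ∑' l : ι, ∑' m : ι, a (k - m) ^ 2 * (b l * b m))
            = (∑' k, a k ^ 2) * (∑' l, b l) ^ 2 := by
          have flip : ∀ k l : ι, (∑' m : ι, a (k - m) ^ 2 * (b l * b m))
              = b l * ∑' m, a (k - m) ^ 2 * b m := by
            intro k l
            rw [← ENNReal.tsum_mul_left]
            apply tsum_congr
            intro m
            ring
          simp_rw [flip]
          calc ∑' k, ∑' l : ι, b l * (∑' m, a (k - m) ^ 2 * b m)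
              = ∑' k, (∑' l, b l) * (∑' m, a (k - m) ^ 2 * b m) := by
                simp_rw [ENNReal.tsum_mul_right]
            _ = (∑' l, b l) * ∑' k, ∑' m, a (k - m) ^ 2 * b m := by
                rw [← ENNReal.tsum_mul_left]
            _ = (∑' l, b l) * ∑' m, ∑' k, a (k - m) ^ 2 * b m := by
                rw [ENNReal.tsum_comm (f := fun k m => a (k - m) ^ 2 * b m)]
            _ = (∑' l, b l) * ∑' m, (∑' k, a k ^ 2) * b m := by
                congr 1
                apply tsum_congr
                intro m
                rw [ENNReal.tsum_mul_right, enn_shift_tsum (fun k => a k ^ 2)]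
            _ = (∑' k, a k ^ 2) * (∑' l, b l) ^ 2 := by
                rw [ENNReal.tsum_mul_left]
                ring
        rw [h1, h2]
        ring

omit [AddCommGroup ι] in
lemma enn_cauchy_schwarz (a b : ι → ℝ≥0∞) :
    (∑' i, a i * b i) ^ 2 ≤ 2 * (∑' i, a i ^ 2) * (∑' i, b i ^ 2) := by
  rw [enn_sq_tsum]
  calc ∑' i, ∑' j, a i * b i * (a j * b j)
      ≤ ∑' i, ∑' j, ((a i * b j) ^ 2 + (a j * b i) ^ 2) := by
        refine ENNReal.tsum_le_tsum fun i => ENNReal.tsum_le_tsum fun j => ?_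
        calc a i * b i * (a j * b j) = (a i * b j) * (a j * b i) := by ring
          _ ≤ _ := enn_mul_le_sq_add_sq _ _
    _ = 2 * (∑' i, a i ^ 2) * (∑' i, b i ^ 2) := by
        simp_rw [ENNReal.tsum_add]
        have e1 : (∑' i, ∑' j, (a i * b j) ^ 2) = (∑' i, a i ^ 2) * (∑' i, b i ^ 2) := by
          simp_rw [mul_pow, ENNReal.tsum_mul_left, ENNReal.tsum_mul_right]
        have e2 : (∑' i, ∑' j, (a j * b i) ^ 2) = (∑' i, a i ^ 2) * (∑' i, b i ^ 2) := by
          calc ∑' i, ∑' j, (a j * b i) ^ 2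
              = ∑' i, ∑' j, a j ^ 2 * b i ^ 2 := by simp_rw [mul_pow]
            _ = ∑' i, (∑' j, a j ^ 2) * b i ^ 2 := by simp_rw [ENNReal.tsum_mul_right]
            _ = (∑' j, a j ^ 2) * ∑' i, b i ^ 2 := ENNReal.tsum_mul_left
        rw [e1, e2]
        ring
end

lemma one_le_wA (d : ℕ) {γ z σ t : ℝ} (hz : 0 ≤ z) (hσ : 0 ≤ σ) (k : Fin d → ℤ) :
    1 ≤ wA d γ z σ t k := by
  rw [wA]
  have h1 : 1 ≤ Real.exp (z * brkt d t k ^ γ) :=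
    Real.one_le_exp (mul_nonneg hz (Real.rpow_nonneg (brkt_nonneg d t k) γ))
  have h2 : 1 ≤ brkt d t k ^ σ := Real.one_le_rpow (one_le_brkt d t k) hσ
  nlinarith

lemma exp_brkt_submul (d : ℕ) {γ z : ℝ} (t : ℝ) (hz : 0 ≤ z) (hγ0 : 0 < γ) (hγ1 : γ ≤ 1)
    (k l : Fin d → ℤ) :
    Real.exp (z * brkt d t k ^ γ) ≤
      Real.exp (z * brkt d t (k - l) ^ γ) * Real.exp (z * brkt d t l ^ γ) := by
  rw [← Real.exp_add]
  apply Real.exp_le_exp.2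
  rw [← mul_add]
  apply mul_le_mul_of_nonneg_left _ hz
  exact rpow_gamma_sub hγ0 hγ1 (brkt_nonneg d t k) (brkt_nonneg _ _ _) (brkt_nonneg _ _ _)
    (brkt_triangle d t k l)

lemma wA_bound (d : ℕ) {γ z σ t : ℝ} (hz : 0 ≤ z) (hγ0 : 0 < γ) (hγ1 : γ ≤ 1) (hσ : 0 ≤ σ)
    (k l : Fin d → ℤ) :
    wA d γ z σ t k ≤ 2 ^ σ * (wA d γ z σ t (k - l) * Real.exp (z * brkt d t l ^ γ)
      + Real.exp (z * brkt d t (k - l) ^ γ) * wA d γ z σ t l) := by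
  have hE := exp_brkt_submul d t hz hγ0 hγ1 k l
  have hP : brkt d t k ^ σ ≤ 2 ^ σ * (brkt d t (k - l) ^ σ + brkt d t l ^ σ) :=
    rpow_sigma_sub hσ (brkt_nonneg _ _ _) (brkt_nonneg _ _ _) (brkt_nonneg _ _ _)
      (brkt_triangle d t k l)
  rw [wA]
  calc Real.exp (z * brkt d t k ^ γ) * brkt d t k ^ σ
      ≤ (Real.exp (z * brkt d t (k - l) ^ γ) * Real.exp (z * brkt d t l ^ γ)) *
        (2 ^ σ * (brkt d t (k - l) ^ σ + brkt d t l ^ σ)) := by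
        apply mul_le_mul hE hP (Real.rpow_nonneg (brkt_nonneg _ _ _) σ) (by positivity)
    _ = 2 ^ σ * (wA d γ z σ t (k - l) * Real.exp (z * brkt d t l ^ γ)
      + Real.exp (z * brkt d t (k - l) ^ γ) * wA d γ z σ t l) := by
        rw [wA, wA]; ring

lemma wA_lower (d : ℕ) {σ : ℝ} (t : ℝ) (hσ : 0 ≤ σ) (k : Fin d → ℤ) :
    (1 + ∑ i, ((k i : ℝ)) ^ 2) ^ (σ / 2) ≤ brkt d t k ^ σ := by
  have h := sqrt_one_le_brkt d t k
  have hx0 : (0:ℝ) ≤ 1 + ∑ i, ((k i : ℝ)) ^ 2 := by positivity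
  calc (1 + ∑ i, ((k i : ℝ)) ^ 2) ^ (σ / 2)
      = ((1 + ∑ i, ((k i : ℝ)) ^ 2) ^ ((1:ℝ)/2)) ^ σ := by
        rw [← Real.rpow_mul hx0]
        congr 1
        ring
    _ = (Real.sqrt (1 + ∑ i, ((k i : ℝ)) ^ 2)) ^ σ := by
        rw [Real.sqrt_eq_rpow]
    _ ≤ brkt d t k ^ σ := Real.rpow_le_rpow (Real.sqrt_nonneg _) h hσ

/-- The Gevrey norm `‖Aω‖_{L²}` of a function on `𝕋^d`, expressed through its Fourier
coefficients: `‖Aω‖²_{L²} = ∑_k e^{2z⟨(k,kt)⟩^γ} ⟨(k,kt)⟩^{2σ} |ω̂(k)|²`. -/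
noncomputable def gnorm (d : ℕ) (γ z σ t : ℝ) (w : (Fin d → ℤ) → ℂ) : ℝ :=
  Real.sqrt (∑' k : Fin d → ℤ, wA d γ z σ t k ^ 2 * ‖w k‖ ^ 2)

/-- Fourier coefficients of a pointwise product: convolution of the coefficients. -/
noncomputable def convFC (d : ℕ) (f g : (Fin d → ℤ) → ℂ) : (Fin d → ℤ) → ℂ :=
  fun k => ∑' ℓ : Fin d → ℤ, f (k - ℓ) * g ℓ

/-- Algebra property of the Gevrey space: for `σ > d/2` there is `C` such that, for any function
`ω` on `𝕋^d` (described by its Fourier coefficients `ω̂`) with finite Gevrey norm,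
`‖A(ω²)‖_{L²} ≤ C ‖Aω‖²_{L²}`, where the Fourier coefficients of `ω²` are `ω̂ * ω̂`. -/
theorem gevrey_algebra (d : ℕ) (hd : 1 ≤ d) (σ γ : ℝ) (hσ : (d : ℝ) / 2 < σ)
    (hγ0 : 0 < γ) (hγ1 : γ ≤ 1) :
    ∃ C > 0, ∀ (z t : ℝ), 0 ≤ z → ∀ w : (Fin d → ℤ) → ℂ,
      Summable (fun k : Fin d → ℤ => wA d γ z σ t k ^ 2 * ‖w k‖ ^ 2) →
      gnorm d γ z σ t (convFC d w w) ≤ C * gnorm d γ z σ t w ^ 2 := by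
  have hσ0 : 0 < σ := lt_of_le_of_lt (by positivity) hσ
  have hK : Summable (fun k : Fin d → ℤ => (1 + ∑ i, ((k i : ℝ)) ^ 2) ^ (-σ)) :=
    summable_majorant d hd hσ
  set K : ℝ := ∑' k : Fin d → ℤ, (1 + ∑ i, ((k i : ℝ)) ^ 2) ^ (-σ) with hKdef
  have hK0 : 0 ≤ K := tsum_nonneg (fun k => by positivity)
  have h2σ : (0:ℝ) < 2 ^ σ := Real.rpow_pos_of_pos (by norm_num) σ
  set C' : ℝ := 4 * 2 ^ σ * Real.sqrt K with hC'
  have hC'0 : 0 ≤ C' := by positivity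
  refine ⟨C' + 1, by positivity, ?_⟩
  intro z t hz w hw
  -- real quantities
  set E : (Fin d → ℤ) → ℝ := fun k => Real.exp (z * brkt d t k ^ γ) with hE
  set F : (Fin d → ℤ) → ℝ := fun k => wA d γ z σ t k * ‖w k‖ with hF
  set G : (Fin d → ℤ) → ℝ := fun k => E k * ‖w k‖ with hG
  have hwA1 : ∀ k, 1 ≤ wA d γ z σ t k := one_le_wA d hz hσ0.le
  have hwA0 : ∀ k, 0 ≤ wA d γ z σ t k := fun k => le_trans zero_le_one (hwA1 k)
  have hF0 : ∀ k, 0 ≤ F k := fun k => mul_nonneg (hwA0 k) (norm_nonneg _)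
  have hG0 : ∀ k, 0 ≤ G k := fun k => mul_nonneg (Real.exp_nonneg _) (norm_nonneg _)
  have hF2 : Summable (fun k => F k ^ 2) := hw.congr (fun k => by rw [hF]; ring)
  have hw_le_F : ∀ k, ‖w k‖ ≤ F k := by
    intro k
    have h := hwA1 k
    have hn := norm_nonneg (w k)
    show ‖w k‖ ≤ wA d γ z σ t k * ‖w k‖
    nlinarith
  set mreal : ℝ := ∑' k : Fin d → ℤ, wA d γ z σ t k ^ 2 * ‖w k‖ ^ 2 with hm
  have hm0 : 0 ≤ mreal := tsum_nonneg fun k => by positivity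
  -- shifted summability
  have hF2shift : ∀ k : Fin d → ℤ, Summable (fun l : Fin d → ℤ => F (k - l) ^ 2) := by
    intro k
    exact ((Equiv.subLeft k).summable_iff (f := fun j : Fin d → ℤ => F j ^ 2)).2 hF2
  -- product summability
  have hprod_sum : ∀ k : Fin d → ℤ, Summable (fun l : Fin d → ℤ => ‖w (k - l)‖ * ‖w l‖) := by
    intro k
    apply Summable.of_nonneg_of_le (fun l => by positivity) _ ((hF2shift k).add hF2)
    intro l
    have h1 := hw_le_F (k - l)
    have h2 := hw_le_F l
    nlinarith [norm_nonneg (w (k - l)), norm_nonneg (w l), hF0 (k - l), hF0 l,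
      sq_nonneg (F (k - l) - F l)]
  -- norm of the convolution
  have hconv_le : ∀ k : Fin d → ℤ,
      ‖convFC d w w k‖ ≤ ∑' l : Fin d → ℤ, ‖w (k - l)‖ * ‖w l‖ := by
    intro k
    rw [convFC]
    calc ‖∑' l : Fin d → ℤ, w (k - l) * w l‖ ≤ ∑' l : Fin d → ℤ, ‖w (k - l) * w l‖ :=
        norm_tsum_le_tsum_norm ((hprod_sum k).congr fun l => (norm_mul _ _).symm)
      _ = ∑' l : Fin d → ℤ, ‖w (k - l)‖ * ‖w l‖ := by simp_rw [norm_mul]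
  -- ENNReal quantities
  set nF : (Fin d → ℤ) → ℝ≥0∞ := fun k => ENNReal.ofReal (F k) with hnF
  set nG : (Fin d → ℤ) → ℝ≥0∞ := fun k => ENNReal.ofReal (G k) with hnG
  set nr : (Fin d → ℤ) → ℝ≥0∞ :=
    fun k => ENNReal.ofReal ((1 + ∑ i, ((k i : ℝ)) ^ 2) ^ (-(σ / 2))) with hnr
  have hnFsq : ∀ k, nF k ^ 2 = ENNReal.ofReal (wA d γ z σ t k ^ 2 * ‖w k‖ ^ 2) := by
    intro k
    rw [hnF]
    simp only
    rw [← ENNReal.ofReal_pow (hF0 k)]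
    congr 1
    rw [hF]
    ring
  have hM : (∑' k : Fin d → ℤ, nF k ^ 2) = ENNReal.ofReal mreal := by
    rw [hm, ENNReal.ofReal_tsum_of_nonneg (fun k => by positivity) hw]
    exact tsum_congr hnFsq
  have hG_le : ∀ k, nG k ≤ nF k * nr k := by
    intro k
    rw [hnG, hnF, hnr]
    simp only
    rw [← ENNReal.ofReal_mul (hF0 k)]
    apply ENNReal.ofReal_le_ofReal
    have hx0 : (0:ℝ) < 1 + ∑ i, ((k i : ℝ)) ^ 2 := by positivity
    have hxp : (0:ℝ) < (1 + ∑ i, ((k i : ℝ)) ^ 2) ^ (σ / 2) := Real.rpow_pos_of_pos hx0 _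
    have hr : (1 + ∑ i, ((k i : ℝ)) ^ 2) ^ (-(σ / 2))
        = ((1 + ∑ i, ((k i : ℝ)) ^ 2) ^ (σ / 2))⁻¹ := Real.rpow_neg hx0.le _
    have hP := wA_lower d t hσ0.le k
    have h1 : 1 ≤ brkt d t k ^ σ * (1 + ∑ i, ((k i : ℝ)) ^ 2) ^ (-(σ / 2)) := by
      rw [hr]
      have h2 := mul_le_mul_of_nonneg_right hP (inv_nonneg.2 hxp.le)
      rwa [mul_inv_cancel₀ hxp.ne'] at h2
    calc G k = G k * 1 := by ring
      _ ≤ G k * (brkt d t k ^ σ * (1 + ∑ i, ((k i : ℝ)) ^ 2) ^ (-(σ / 2))) :=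
          mul_le_mul_of_nonneg_left h1 (hG0 k)
      _ = F k * (1 + ∑ i, ((k i : ℝ)) ^ 2) ^ (-(σ / 2)) := by
          simp only [hG, hF, hE, wA]
          ring
  have hnr2 : ∀ k, nr k ^ 2 = ENNReal.ofReal ((1 + ∑ i, ((k i : ℝ)) ^ 2) ^ (-σ)) := by
    intro k
    rw [hnr]
    simp only
    rw [← ENNReal.ofReal_pow (by positivity)]
    congr 1
    rw [sq, ← Real.rpow_add (by positivity)]
    congr 1
    ring
  have hKenn : (∑' k : Fin d → ℤ, nr k ^ 2) = ENNReal.ofReal K := by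
    rw [hKdef, ENNReal.ofReal_tsum_of_nonneg (fun k => by positivity) hK]
    exact tsum_congr hnr2
  -- per-k pointwise bound in ℝ≥0∞
  set c : ℝ≥0∞ := ENNReal.ofReal (2 ^ σ) with hc
  set S : (Fin d → ℤ) → ℝ≥0∞ := fun k => ∑' l : Fin d → ℤ, nF (k - l) * nG l with hS
  have hstepD : ∀ k : Fin d → ℤ,
      ENNReal.ofReal (wA d γ z σ t k * ‖convFC d w w k‖) ≤ 2 * c * S k := by
    intro k
    have hQ : wA d γ z σ t k * ‖convFC d w w k‖
        ≤ ∑' l : Fin d → ℤ, wA d γ z σ t k * (‖w (k - l)‖ * ‖w l‖) := by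
      rw [tsum_mul_left]
      exact mul_le_mul_of_nonneg_left (hconv_le k) (hwA0 k)
    have hterm : ∀ l : Fin d → ℤ, wA d γ z σ t k * (‖w (k - l)‖ * ‖w l‖)
        ≤ 2 ^ σ * (F (k - l) * G l + G (k - l) * F l) := by
      intro l
      have hb := wA_bound d (t := t) hz hγ0 hγ1 hσ0.le k l
      have hn : (0:ℝ) ≤ ‖w (k - l)‖ * ‖w l‖ := by positivity
      calc wA d γ z σ t k * (‖w (k - l)‖ * ‖w l‖)
          ≤ (2 ^ σ * (wA d γ z σ t (k - l) * Real.exp (z * brkt d t l ^ γ)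
            + Real.exp (z * brkt d t (k - l) ^ γ) * wA d γ z σ t l)) * (‖w (k - l)‖ * ‖w l‖) :=
            mul_le_mul_of_nonneg_right hb hn
        _ = 2 ^ σ * (F (k - l) * G l + G (k - l) * F l) := by
            simp only [hF, hG, hE]
            ring
    calc ENNReal.ofReal (wA d γ z σ t k * ‖convFC d w w k‖)
        ≤ ENNReal.ofReal (∑' l : Fin d → ℤ, wA d γ z σ t k * (‖w (k - l)‖ * ‖w l‖)) :=
          ENNReal.ofReal_le_ofReal hQ
      _ = ∑' l : Fin d → ℤ, ENNReal.ofReal (wA d γ z σ t k * (‖w (k - l)‖ * ‖w l‖)) :=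
          ENNReal.ofReal_tsum_of_nonneg (fun l => mul_nonneg (hwA0 k) (by positivity))
            ((hprod_sum k).mul_left _)
      _ ≤ ∑' l : Fin d → ℤ, c * (nF (k - l) * nG l + nG (k - l) * nF l) := by
          apply ENNReal.tsum_le_tsum
          intro l
          calc ENNReal.ofReal (wA d γ z σ t k * (‖w (k - l)‖ * ‖w l‖))
              ≤ ENNReal.ofReal (2 ^ σ * (F (k - l) * G l + G (k - l) * F l)) :=
                ENNReal.ofReal_le_ofReal (hterm l)
            _ = c * (nF (k - l) * nG l + nG (k - l) * nF l) := by
                rw [hc, hnF, hnG]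
                simp only
                rw [ENNReal.ofReal_mul h2σ.le,
                  ENNReal.ofReal_add (mul_nonneg (hF0 _) (hG0 _)) (mul_nonneg (hG0 _) (hF0 _)),
                  ENNReal.ofReal_mul (hF0 _), ENNReal.ofReal_mul (hG0 _)]
      _ = c * (S k + ∑' l : Fin d → ℤ, nG (k - l) * nF l) := by
          rw [ENNReal.tsum_mul_left, ENNReal.tsum_add]
      _ = c * (S k + S k) := by rw [enn_conv_flip nG nF k, hS]
      _ = 2 * c * S k := by ring
  -- global bound
  set T : ℝ≥0∞ :=
    ∑' k : Fin d → ℤ, ENNReal.ofReal (wA d γ z σ t k ^ 2 * ‖convFC d w w k‖ ^ 2) with hT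
  have hTbound : T ≤ 16 * c ^ 2 * (ENNReal.ofReal mreal) ^ 2 * ENNReal.ofReal K := by
    have hsq : ∀ k : Fin d → ℤ, ENNReal.ofReal (wA d γ z σ t k ^ 2 * ‖convFC d w w k‖ ^ 2)
        ≤ 4 * c ^ 2 * S k ^ 2 := by
      intro k
      have he : ENNReal.ofReal (wA d γ z σ t k ^ 2 * ‖convFC d w w k‖ ^ 2)
          = ENNReal.ofReal (wA d γ z σ t k * ‖convFC d w w k‖) ^ 2 := by
        rw [← ENNReal.ofReal_pow (mul_nonneg (hwA0 k) (norm_nonneg _))]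
        congr 1
        ring
      rw [he]
      calc ENNReal.ofReal (wA d γ z σ t k * ‖convFC d w w k‖) ^ 2
          ≤ (2 * c * S k) ^ 2 := pow_le_pow_left' (hstepD k) 2
        _ = 4 * c ^ 2 * S k ^ 2 := by ring
    calc T ≤ ∑' k : Fin d → ℤ, 4 * c ^ 2 * S k ^ 2 := ENNReal.tsum_le_tsum hsq
      _ = 4 * c ^ 2 * ∑' k : Fin d → ℤ, S k ^ 2 := ENNReal.tsum_mul_left
      _ ≤ 4 * c ^ 2 *
          (2 * (∑' k : Fin d → ℤ, nF k ^ 2) * (∑' l : Fin d → ℤ, nG l) ^ 2) :=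
          mul_le_mul' le_rfl (enn_conv_l2 nF nG)
      _ ≤ 4 * c ^ 2 * (2 * (∑' k : Fin d → ℤ, nF k ^ 2) *
          (2 * (∑' k : Fin d → ℤ, nF k ^ 2) * (∑' k : Fin d → ℤ, nr k ^ 2))) := by
          apply mul_le_mul' le_rfl
          apply mul_le_mul' le_rfl
          calc (∑' l : Fin d → ℤ, nG l) ^ 2
              ≤ (∑' l : Fin d → ℤ, nF l * nr l) ^ 2 :=
                pow_le_pow_left' (ENNReal.tsum_le_tsum hG_le) 2
            _ ≤ 2 * (∑' k : Fin d → ℤ, nF k ^ 2) * (∑' k : Fin d → ℤ, nr k ^ 2) :=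
                enn_cauchy_schwarz nF nr
      _ = 16 * c ^ 2 * (∑' k : Fin d → ℤ, nF k ^ 2) ^ 2 * (∑' k : Fin d → ℤ, nr k ^ 2) := by
          ring
      _ = 16 * c ^ 2 * (ENNReal.ofReal mreal) ^ 2 * ENNReal.ofReal K := by rw [hM, hKenn]
  have hcne : c ≠ ⊤ := ENNReal.ofReal_ne_top
  have hBne : (16 * c ^ 2 * (ENNReal.ofReal mreal) ^ 2 * ENNReal.ofReal K) ≠ ⊤ := by
    apply ENNReal.mul_ne_top
    apply ENNReal.mul_ne_top
    apply ENNReal.mul_ne_top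
    · exact ENNReal.ofNat_ne_top
    · exact ENNReal.pow_ne_top hcne
    · exact ENNReal.pow_ne_top ENNReal.ofReal_ne_top
    · exact ENNReal.ofReal_ne_top
  have hTne : T ≠ ⊤ := (lt_of_le_of_lt hTbound hBne.lt_top).ne
  have htsum : (∑' k : Fin d → ℤ, wA d γ z σ t k ^ 2 * ‖convFC d w w k‖ ^ 2) = T.toReal := by
    rw [hT, ENNReal.tsum_toReal_eq (fun k => ENNReal.ofReal_ne_top)]
    exact tsum_congr fun k => (ENNReal.toReal_ofReal (by positivity)).symm
  have hfin : (∑' k : Fin d → ℤ, wA d γ z σ t k ^ 2 * ‖convFC d w w k‖ ^ 2)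
      ≤ (C' * mreal) ^ 2 := by
    rw [htsum]
    have h := ENNReal.toReal_mono hBne hTbound
    apply le_trans h
    rw [ENNReal.toReal_mul, ENNReal.toReal_mul, ENNReal.toReal_mul, ENNReal.toReal_pow,
      ENNReal.toReal_pow, ENNReal.toReal_ofReal hm0, ENNReal.toReal_ofReal hK0, hc,
      ENNReal.toReal_ofReal h2σ.le]
    have h16 : ((16 : ℝ≥0∞)).toReal = (16:ℝ) := by simp
    rw [h16]
    have hsqK : Real.sqrt K ^ 2 = K := Real.sq_sqrt hK0
    apply le_of_eq
    calc (16:ℝ) * (2 ^ σ) ^ 2 * mreal ^ 2 * K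
        = 16 * (2 ^ σ) ^ 2 * mreal ^ 2 * (Real.sqrt K ^ 2) := by rw [hsqK]
      _ = (4 * 2 ^ σ * Real.sqrt K * mreal) ^ 2 := by ring
      _ = (C' * mreal) ^ 2 := by rw [hC']
  have hgw : gnorm d γ z σ t w ^ 2 = mreal := by
    rw [gnorm, ← hm, Real.sq_sqrt hm0]
  rw [hgw, gnorm]
  calc Real.sqrt (∑' k : Fin d → ℤ, wA d γ z σ t k ^ 2 * ‖convFC d w w k‖ ^ 2)
      ≤ Real.sqrt ((C' * mreal) ^ 2) := Real.sqrt_le_sqrt hfin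
    _ = C' * mreal := Real.sqrt_sq (by positivity)
    _ ≤ (C' + 1) * mreal := by nlinarith
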